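/- Let a, b be coprime positive integers with ab ≠ 1, and let s, t be coprime integers. Set λ = gcd(Q₁(s,t), Q₂(s,t)), λ₁ = odd part of gcd(s, a² − b²), and λ₂ = odd part of gcd(s − at, a² + b²). Then λ = 2^ν · λ₁ · λ₂, where ν = 0 if 2 ∣ ab and t is odd; ν = 1 if 2 ∣ ab and t is even; ν = 1 if ab is odd and s is odd; and ν = min{2 + ν₂(s), ν₂(a² − b²)} if ab is odd and s is even (with the convention ν₂(0) = +∞, so that in the case s = 0 one has ν = ν₂(a² − b²)). -/

import Mathlib

open scoped Classical

/-- `Q₁(s,t) = 2s² + (a² − b²)t² − 4ast`. -/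
def Q1 (a b s t : ℤ) : ℤ := 2 * s ^ 2 + (a ^ 2 - b ^ 2) * t ^ 2 - 4 * a * s * t

/-- `Q₂(s,t) = −2s² + (a² − b²)t²`. -/
def Q2 (a b s t : ℤ) : ℤ := -2 * s ^ 2 + (a ^ 2 - b ^ 2) * t ^ 2

/-- The odd part `m / 2^{ν₂(m)}` of a natural number. -/
def oddPart (m : ℕ) : ℕ := m / 2 ^ padicValNat 2 m

lemma two_pow_mul_oddPart (m : ℕ) : 2 ^ padicValNat 2 m * oddPart m = m := by
  rcases eq_or_ne m 0 with rfl | hm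
  · simp [oddPart]
  · exact Nat.mul_div_cancel' pow_padicValNat_dvd

lemma oddPart_dvd (m : ℕ) : oddPart m ∣ m :=
  ⟨2 ^ padicValNat 2 m, by rw [mul_comm]; exact (two_pow_mul_oddPart m).symm⟩

lemma oddPart_not_two_dvd {m : ℕ} (hm : m ≠ 0) : ¬ 2 ∣ oddPart m := by
  intro ⟨c, hc⟩
  apply pow_succ_padicValNat_not_dvd (p := 2) hm
  exact ⟨c, by nth_rewrite 1 [← two_pow_mul_oddPart m]; rw [hc]; ring⟩

lemma odd_dvd_oddPart {k m : ℕ} (hk : ¬ 2 ∣ k) (h : k ∣ m) : k ∣ oddPart m := by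
  have hcop : Nat.Coprime k (2 ^ padicValNat 2 m) :=
    Nat.Coprime.pow_right _
      (Nat.coprime_comm.mp ((Nat.Prime.coprime_iff_not_dvd Nat.prime_two).mpr hk))
  exact hcop.dvd_of_dvd_mul_left (by rw [two_pow_mul_oddPart]; exact h)

lemma padicValNat_eq_of_dvd_not_dvd {g ν : ℕ} (hg : g ≠ 0) (h1 : 2 ^ ν ∣ g)
    (h2 : ¬ 2 ^ (ν + 1) ∣ g) : padicValNat 2 g = ν := by
  have hle : ν ≤ padicValNat 2 g := by
    rcases (padicValNat_dvd_iff ν g).mp h1 with h | h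
    · exact absurd h hg
    · exact h
  have hlt : padicValNat 2 g < ν + 1 := by
    by_contra hc
    exact h2 ((padicValNat_dvd_iff _ g).mpr (Or.inr (by omega)))
  omega

lemma exists_two_pow_mul (n : ℤ) (hn : n ≠ 0) :
    ∃ c : ℤ, ¬ (2:ℤ) ∣ c ∧ n = 2 ^ padicValInt 2 n * c := by
  set v := padicValInt 2 n with hv
  have h2 : (2:ℤ) ^ v ∣ n := by
    rw [show ((2:ℤ) = ((2:ℕ):ℤ)) by norm_num]
    exact (padicValInt_dvd_iff _ n).mpr (Or.inr le_rfl)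
  obtain ⟨c, hc⟩ := h2
  refine ⟨c, ?_, hc⟩
  rintro ⟨d, rfl⟩
  have h3 : ((2:ℤ)) ^ (v + 1) ∣ n := ⟨d, by rw [hc]; ring⟩
  rw [show ((2:ℤ) = ((2:ℕ):ℤ)) by norm_num] at h3
  rcases (padicValInt_dvd_iff _ n).mp h3 with h | h
  · exact hn h
  · omega

lemma not_two_pow_succ_dvd {m : ℕ} {c : ℤ} (hc : ¬ (2:ℤ) ∣ c) :
    ¬ (2:ℤ) ^ (m + 1) ∣ 2 ^ m * c := by
  rintro ⟨x, hx⟩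
  apply hc
  refine ⟨x, ?_⟩
  have h2 : (2:ℤ)^m ≠ 0 := by positivity
  apply mul_left_cancel₀ h2
  rw [hx]; ring

lemma sq_mod_eight (a : ℤ) (h : ¬ (2:ℤ) ∣ a) : a^2 % 8 = 1 := by
  obtain ⟨k, rfl⟩ : Odd a := Int.odd_iff.mpr (by omega)
  have h2 : (2*k+1)^2 = 4*(k*(k+1)) + 1 := by ring
  obtain ⟨j, hj⟩ : Even (k*(k+1)) := Int.even_mul_succ_self k
  rw [h2, hj]
  omega

lemma zmod2_one {x : ℤ} (hx : ¬ (2:ℤ) ∣ x) : (x : ZMod 2) = 1 := by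
  have h0 : ((x : ZMod 2)) ≠ 0 := by
    rw [Ne, ZMod.intCast_zmod_eq_zero_iff_dvd]
    exact_mod_cast hx
  have hall : ∀ y : ZMod 2, y = 0 ∨ y = 1 := by intro y; fin_cases y <;> [exact Or.inl rfl; exact Or.inr rfl]
  rcases hall (x : ZMod 2) with h | h
  · exact absurd h h0
  · exact h

lemma not_two_dvd_of_zmod {x : ℤ} (h : ((x : ZMod 2)) = 1) : ¬ (2:ℤ) ∣ x := by
  intro hd
  have h0 := (ZMod.intCast_zmod_eq_zero_iff_dvd x 2).mpr (by exact_mod_cast hd)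
  rw [h0] at h
  exact one_ne_zero h.symm

lemma caseB2 (k m : ℕ) (hk : 1 ≤ k) (hm : 3 ≤ m) (s' D₀ a t : ℤ)
    (hs' : ¬(2:ℤ) ∣ s') (hD₀ : ¬(2:ℤ) ∣ D₀) (ha : ¬(2:ℤ) ∣ a) (ht : ¬(2:ℤ) ∣ t) :
    ((2:ℤ)^(min (2+k) m) ∣ 2*(2^k*s')^2 + (2^m*D₀)*t^2 - 4*a*(2^k*s')*t) ∧
    ((2:ℤ)^(min (2+k) m) ∣ -2*(2^k*s')^2 + (2^m*D₀)*t^2) ∧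
    ¬(((2:ℤ)^(min (2+k) m + 1) ∣ 2*(2^k*s')^2 + (2^m*D₀)*t^2 - 4*a*(2^k*s')*t) ∧
      ((2:ℤ)^(min (2+k) m + 1) ∣ -2*(2^k*s')^2 + (2^m*D₀)*t^2)) := by
  set ν := min (2+k) m with hν
  have hd1 : (2:ℤ)^ν ∣ 2*(2^k*s')^2 := by
    rw [show 2*(2^k*s')^2 = 2^(2*k+1) * s'^2 by ring]
    exact Dvd.dvd.mul_right (pow_dvd_pow 2 (by omega)) _
  have hd2 : (2:ℤ)^ν ∣ (2^m*D₀)*t^2 :=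
    Dvd.dvd.mul_right (Dvd.dvd.mul_right (pow_dvd_pow 2 (by omega)) _) _
  have hd3 : (2:ℤ)^ν ∣ 4*a*(2^k*s')*t := by
    rw [show 4*a*(2^k*s')*t = 2^(k+2) * (a*s'*t) by ring]
    exact Dvd.dvd.mul_right (pow_dvd_pow 2 (by omega)) _
  refine ⟨dvd_sub (dvd_add hd1 hd2) hd3,
    by rw [show -2*(2^k*s')^2 + (2^m*D₀)*t^2 =
        (2*(2^k*s')^2 + (2^m*D₀)*t^2) - 2*(2*(2^k*s')^2) by ring]
       exact dvd_sub (dvd_add hd1 hd2) (Dvd.dvd.mul_left hd1 2), ?_⟩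
  rintro ⟨h1, h2⟩
  rcases eq_or_lt_of_le hk with hk1 | hk2
  · -- k = 1
    rcases eq_or_lt_of_le hm with hm3 | hm4
    · -- k = 1, m = 3 : use q1
      have hνe : ν = 3 := by omega
      have heq : 2*(2^k*s')^2 + (2^m*D₀)*t^2 - 4*a*(2^k*s')*t
          = 2^3 * (s'^2 + D₀*t^2 - a*s'*t) := by
        rw [← hk1, ← hm3]; ring
      rw [hνe, heq] at h1
      revert h1
      apply not_two_pow_succ_dvd
      apply not_two_dvd_of_zmod
      push_cast
      rw [zmod2_one hD₀, zmod2_one ht, zmod2_one hs', zmod2_one ha]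
      decide
    · -- k = 1, m ≥ 4 : use q2
      have hνe : ν = 3 := by omega
      obtain ⟨j, hj⟩ : ∃ j, m = 4 + j := ⟨m - 4, by omega⟩
      have hp : (2:ℤ)^m = 2^3 * (2*2^j) := by
        rw [hj, pow_add]; ring
      have heq : -2*(2^k*s')^2 + (2^m*D₀)*t^2
          = 2^3 * (-(s'^2) + 2*(2^j*(D₀*t^2))) := by
        rw [← hk1]; linear_combination (D₀*t^2) * hp
      rw [hνe, heq] at h2
      revert h2
      apply not_two_pow_succ_dvd
      apply not_two_dvd_of_zmod
      push_cast
      rw [zmod2_one hD₀, zmod2_one ht, zmod2_one hs']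
      ring_nf
      simp [show ((2:ZMod 2)) = 0 from rfl, pow_succ]
      all_goals decide
  · -- k ≥ 2
    rcases le_or_gt m (k+2) with hmk | hmk
    · -- m ≤ k+2 : use q2
      have hνe : ν = m := by omega
      obtain ⟨j, hj⟩ : ∃ j, 2*k+1 = m + 1 + j := ⟨2*k - m, by omega⟩
      have hp : (2:ℤ)^(2*k+1) = 2^m * (2*2^j) := by
        rw [hj, pow_add, pow_add]; ring
      have heq : -2*(2^k*s')^2 + (2^m*D₀)*t^2
          = 2^m * (-(2*(2^j*s'^2)) + D₀*t^2) := by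
        linear_combination (-(s'^2)) * hp
      rw [hνe, heq] at h2
      revert h2
      apply not_two_pow_succ_dvd
      apply not_two_dvd_of_zmod
      push_cast
      rw [zmod2_one hD₀, zmod2_one ht]
      ring_nf
      simp [show ((2:ZMod 2)) = 0 from rfl, pow_succ]
      all_goals decide
    · -- m ≥ k+3 : use q1
      have hνe : ν = k+2 := by omega
      obtain ⟨j1, hj1⟩ : ∃ j, 2*k+1 = (k+2) + 1 + j := ⟨k - 2, by omega⟩
      obtain ⟨j2, hj2⟩ : ∃ j, m = (k+2) + 1 + j := ⟨m - k - 3, by omega⟩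
      have hp1 : (2:ℤ)^(2*k+1) = 2^(k+2) * (2*2^j1) := by
        rw [hj1, pow_add, pow_add]; ring
      have hp2 : (2:ℤ)^m = 2^(k+2) * (2*2^j2) := by
        rw [hj2, pow_add, pow_add]; ring
      have heq : 2*(2^k*s')^2 + (2^m*D₀)*t^2 - 4*a*(2^k*s')*t
          = 2^(k+2) * (2*(2^j1*s'^2) + 2*(2^j2*(D₀*t^2)) - a*s'*t) := by
        linear_combination s'^2 * hp1 + (D₀*t^2) * hp2
      rw [hνe, heq] at h1
      revert h1
      apply not_two_pow_succ_dvd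
      apply not_two_dvd_of_zmod
      push_cast
      rw [zmod2_one hD₀, zmod2_one ht, zmod2_one hs', zmod2_one ha]
      ring_nf
      simp [show ((2:ZMod 2)) = 0 from rfl, pow_succ]
      all_goals decide
theorem gcd_Q1_Q2_factorisation (a b : ℤ) (ha : 0 < a) (hb : 0 < b)
    (hab : Int.gcd a b = 1) (hab1 : a * b ≠ 1) (s t : ℤ) (hst : Int.gcd s t = 1) :
    Int.gcd (Q1 a b s t) (Q2 a b s t) =
      2 ^ (if (2 : ℤ) ∣ a * b then (if (2 : ℤ) ∣ t then 1 else 0)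
           else if (2 : ℤ) ∣ s then
             (if s = 0 then padicValInt 2 (a ^ 2 - b ^ 2)
              else min (2 + padicValInt 2 s) (padicValInt 2 (a ^ 2 - b ^ 2)))
           else 1) *
        oddPart (Int.gcd s (a ^ 2 - b ^ 2)) *
        oddPart (Int.gcd (s - a * t) (a ^ 2 + b ^ 2)) := by
  -- basic nonvanishing facts
  have hD0 : a ^ 2 - b ^ 2 ≠ 0 := by
    intro h
    have hab' : a = b := by nlinarith
    rw [hab', Int.gcd_self] at hab
    have : b = 1 := by
      have := Int.natAbs_eq b
      omega
    rw [hab', this] at hab1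
    simp at hab1
  have hS0 : (0:ℤ) < a ^ 2 + b ^ 2 := by positivity
  have idE : Q1 a b s t - Q2 a b s t = 4 * (s * (s - a * t)) := by
    simp only [Q1, Q2]; ring
  have hgne : Int.gcd (Q1 a b s t) (Q2 a b s t) ≠ 0 := by
    intro h
    rw [Int.gcd_eq_zero_iff] at h
    obtain ⟨h1, h2⟩ := h
    have h3 : 4 * (s * (s - a * t)) = 0 := by rw [← idE, h1, h2]; ring
    have h4 : s = 0 ∨ s - a * t = 0 := by
      rcases mul_eq_zero.mp h3 with h | h
      · norm_num at h
      · exact mul_eq_zero.mp h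
    rcases h4 with h4 | h4
    · subst h4
      have h5 : (a ^ 2 - b ^ 2) * t ^ 2 = 0 := by
        have := h2; simp only [Q2] at this; linarith
      rcases mul_eq_zero.mp h5 with h | h
      · exact hD0 h
      · have ht : t = 0 := by
          exact pow_eq_zero_iff (n := 2) (by norm_num) |>.mp h
        rw [ht] at hst
        simp at hst
    · have hs : s = a * t := by linarith
      have h5 : Q2 a b s t = -((a^2+b^2) * t^2) := by
        simp only [Q2]; rw [hs]; ring
      rw [h2] at h5
      have h6 : (a^2+b^2) * t^2 = 0 := by linarith
      rcases mul_eq_zero.mp h6 with h | h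
      · linarith
      · have ht : t = 0 := pow_eq_zero_iff (n := 2) (by norm_num) |>.mp h
        rw [ht, mul_zero] at hs
        rw [hs, ht] at hst
        simp at hst
  set g := Int.gcd (Q1 a b s t) (Q2 a b s t) with hg
  have hgq1 : (g:ℤ) ∣ Q1 a b s t := Int.gcd_dvd_left _ _
  have hgq2 : (g:ℤ) ∣ Q2 a b s t := Int.gcd_dvd_right _ _
  have hgcd1ne : Int.gcd s (a ^ 2 - b ^ 2) ≠ 0 := by
    intro h; exact hD0 (Int.gcd_eq_zero_iff.mp h).2
  have hgcd2ne : Int.gcd (s - a * t) (a ^ 2 + b ^ 2) ≠ 0 := by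
    intro h
    have := (Int.gcd_eq_zero_iff.mp h).2
    linarith
  set lam1 := oddPart (Int.gcd s (a ^ 2 - b ^ 2)) with hlam1
  set lam2 := oddPart (Int.gcd (s - a * t) (a ^ 2 + b ^ 2)) with hlam2
  have hlam1odd : ¬ 2 ∣ lam1 := oddPart_not_two_dvd hgcd1ne
  have hlam2odd : ¬ 2 ∣ lam2 := oddPart_not_two_dvd hgcd2ne
  -- lam1 divides s and a^2-b^2 (as integers)
  have hlam1s : (lam1:ℤ) ∣ s :=
    ((Int.natCast_dvd_natCast.mpr (oddPart_dvd _)).trans (Int.gcd_dvd_left _ _))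
  have hlam1D : (lam1:ℤ) ∣ a ^ 2 - b ^ 2 :=
    ((Int.natCast_dvd_natCast.mpr (oddPart_dvd _)).trans (Int.gcd_dvd_right _ _))
  have hlam2u : (lam2:ℤ) ∣ s - a * t :=
    ((Int.natCast_dvd_natCast.mpr (oddPart_dvd _)).trans (Int.gcd_dvd_left _ _))
  have hlam2S : (lam2:ℤ) ∣ a ^ 2 + b ^ 2 :=
    ((Int.natCast_dvd_natCast.mpr (oddPart_dvd _)).trans (Int.gcd_dvd_right _ _))
  -- lam1 and lam2 divide both forms
  have hlam1q1 : (lam1:ℤ) ∣ Q1 a b s t := by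
    rw [show Q1 a b s t = s * (2*s - 4*a*t) + (a^2-b^2) * t^2 by simp only [Q1]; ring]
    exact dvd_add (hlam1s.mul_right _) (hlam1D.mul_right _)
  have hlam1q2 : (lam1:ℤ) ∣ Q2 a b s t := by
    rw [show Q2 a b s t = -(s * (2*s)) + (a^2-b^2) * t^2 by simp only [Q2]; ring]
    exact dvd_add (dvd_neg.mpr (hlam1s.mul_right _)) (hlam1D.mul_right _)
  have hlam2q1 : (lam2:ℤ) ∣ Q1 a b s t := by
    rw [show Q1 a b s t = (s-a*t) * (2*(s-a*t)) - (a^2+b^2) * t^2 by simp only [Q1]; ring]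
    exact dvd_sub (hlam2u.mul_right _) (hlam2S.mul_right _)
  have hlam2q2 : (lam2:ℤ) ∣ Q2 a b s t := by
    rw [show Q2 a b s t = (s-a*t) * (2*(s-a*t) - 4*s) - (a^2+b^2) * t^2 by simp only [Q2]; ring]
    exact dvd_sub (hlam2u.mul_right _) (hlam2S.mul_right _)
  -- coprimality of lam1 and lam2
  have hcoplam : Nat.Coprime lam1 lam2 := by
    set c := Nat.gcd lam1 lam2 with hc
    have hcodd : ¬ 2 ∣ c := fun h => hlam1odd (h.trans (Nat.gcd_dvd_left _ _))
    have hcD : (c:ℤ) ∣ a ^ 2 - b ^ 2 :=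
      (Int.natCast_dvd_natCast.mpr (Nat.gcd_dvd_left _ _)).trans hlam1D
    have hcS : (c:ℤ) ∣ a ^ 2 + b ^ 2 :=
      (Int.natCast_dvd_natCast.mpr (Nat.gcd_dvd_right _ _)).trans hlam2S
    have hc2a : (c:ℤ) ∣ 2 * a^2 := by
      rw [show (2:ℤ) * a^2 = (a^2+b^2) + (a^2-b^2) by ring]
      exact dvd_add hcS hcD
    have hc2b : (c:ℤ) ∣ 2 * b^2 := by
      rw [show (2:ℤ) * b^2 = (a^2+b^2) - (a^2-b^2) by ring]
      exact dvd_sub hcS hcD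
    have hcop2 : Nat.Coprime c 2 :=
      Nat.coprime_comm.mp ((Nat.Prime.coprime_iff_not_dvd Nat.prime_two).mpr hcodd)
    have hca : c ∣ a.natAbs ^ 2 := by
      have h1 : c ∣ 2 * a.natAbs ^ 2 := by
        have := Int.natCast_dvd.mp hc2a
        simpa [Int.natAbs_mul, Int.natAbs_pow] using this
      exact hcop2.dvd_of_dvd_mul_left h1
    have hcb : c ∣ b.natAbs ^ 2 := by
      have h1 : c ∣ 2 * b.natAbs ^ 2 := by
        have := Int.natCast_dvd.mp hc2b
        simpa [Int.natAbs_mul, Int.natAbs_pow] using this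
      exact hcop2.dvd_of_dvd_mul_left h1
    have habcop : Nat.Coprime (a.natAbs ^ 2) (b.natAbs ^ 2) :=
      (show Nat.Coprime a.natAbs b.natAbs from hab).pow 2 2
    have hgab : Nat.gcd (a.natAbs ^ 2) (b.natAbs ^ 2) = 1 := habcop
    have : c ∣ 1 := by
      rw [← hgab]
      exact Nat.dvd_gcd hca hcb
    exact Nat.dvd_one.mp this
  -- lam1 * lam2 divides the odd part of g
  have hlamg : lam1 * lam2 ∣ oddPart g := by
    apply odd_dvd_oddPart
    · intro h
      rcases (Nat.Prime.dvd_mul Nat.prime_two).mp h with h | h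
      · exact hlam1odd h
      · exact hlam2odd h
    · exact hcoplam.mul_dvd_of_dvd_of_dvd
        (Int.natCast_dvd_natCast.mp (Int.dvd_coe_gcd hlam1q1 hlam1q2))
        (Int.natCast_dvd_natCast.mp (Int.dvd_coe_gcd hlam2q1 hlam2q2))
  -- the odd part of g divides lam1 * lam2
  have hglam : oddPart g ∣ lam1 * lam2 := by
    set g' := oddPart g with hg'
    have hg'odd : ¬ 2 ∣ g' := oddPart_not_two_dvd hgne
    have hg'q1 : (g':ℤ) ∣ Q1 a b s t :=
      (Int.natCast_dvd_natCast.mpr (oddPart_dvd g)).trans hgq1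
    have hg'q2 : (g':ℤ) ∣ Q2 a b s t :=
      (Int.natCast_dvd_natCast.mpr (oddPart_dvd g)).trans hgq2
    have hg'cop2 : Nat.Coprime g' 2 :=
      Nat.coprime_comm.mp ((Nat.Prime.coprime_iff_not_dvd Nat.prime_two).mpr hg'odd)
    have h4 : (g':ℤ) ∣ 4 * (s * (s - a*t)) := by
      rw [← idE]; exact dvd_sub hg'q1 hg'q2
    have hss : g' ∣ s.natAbs * (s - a*t).natAbs := by
      have h5 : g' ∣ 4 * (s.natAbs * (s - a*t).natAbs) := by
        have := Int.natCast_dvd.mp h4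
        simpa [Int.natAbs_mul] using this
      have hcop4 : Nat.Coprime g' 4 := by
        have : (4:ℕ) = 2^2 := by norm_num
        rw [this]
        exact hg'cop2.pow_right _
      exact hcop4.dvd_of_dvd_mul_left h5
    set d := Nat.gcd g' s.natAbs with hd
    set e := Nat.gcd g' (s - a*t).natAbs with he
    have hg'de : g' ∣ d * e := by
      have h : Nat.gcd g' (s.natAbs * (s - a*t).natAbs) ∣ Nat.gcd g' s.natAbs * Nat.gcd g' (s - a*t).natAbs := gcd_mul_dvd_mul_gcd g' s.natAbs (s - a*t).natAbs
      rwa [Nat.gcd_eq_left hss] at h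
    -- d divides lam1
    have hdlam1 : d ∣ lam1 := by
      have hdodd : ¬ 2 ∣ d := fun h => hg'odd (h.trans (Nat.gcd_dvd_left _ _))
      have hds : (d:ℤ) ∣ s := Int.natCast_dvd.mpr (Nat.gcd_dvd_right _ _)
      have hdq2 : (d:ℤ) ∣ Q2 a b s t :=
        (Int.natCast_dvd_natCast.mpr (Nat.gcd_dvd_left _ _)).trans hg'q2
      have hdDt : (d:ℤ) ∣ (a^2-b^2) * t^2 := by
        rw [show (a^2-b^2) * t^2 = Q2 a b s t + s * (2*s) by simp only [Q2]; ring]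
        exact dvd_add hdq2 (hds.mul_right _)
      have hdtcop : Nat.Coprime d t.natAbs := by
        set c := Nat.gcd d t.natAbs with hcdef
        have hcodd : ¬ 2 ∣ c := fun h => hg'odd (h.trans ((Nat.gcd_dvd_left d _).trans (Nat.gcd_dvd_left _ _)))
        have hct : (c:ℤ) ∣ t := Int.natCast_dvd.mpr (Nat.gcd_dvd_right _ _)
        have hcq2 : (c:ℤ) ∣ Q2 a b s t :=
          (Int.natCast_dvd_natCast.mpr ((Nat.gcd_dvd_left d _).trans (Nat.gcd_dvd_left _ _))).trans hg'q2
        have hc2s : (c:ℤ) ∣ 2 * s^2 := by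
          rw [show (2:ℤ) * s^2 = t * ((a^2-b^2) * t) - Q2 a b s t by simp only [Q2]; ring]
          exact dvd_sub (hct.mul_right _) hcq2
        have hcop2 : Nat.Coprime c 2 :=
          Nat.coprime_comm.mp ((Nat.Prime.coprime_iff_not_dvd Nat.prime_two).mpr hcodd)
        have hcs2 : c ∣ s.natAbs ^ 2 := by
          have h1 : c ∣ 2 * s.natAbs ^ 2 := by
            have := Int.natCast_dvd.mp hc2s
            simpa [Int.natAbs_mul, Int.natAbs_pow] using this
          exact hcop2.dvd_of_dvd_mul_left h1
        have hccops : Nat.Coprime c s.natAbs :=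
          Nat.Coprime.coprime_dvd_left (Nat.gcd_dvd_right d _)
            ((show Nat.Coprime s.natAbs t.natAbs from hst).symm)
        exact (hccops.pow_right 2).eq_one_of_dvd hcs2
      have hdD : d ∣ (a^2-b^2).natAbs := by
        have h1 : d ∣ (a^2-b^2).natAbs * t.natAbs ^ 2 := by
          have := Int.natCast_dvd.mp hdDt
          simpa [Int.natAbs_mul, Int.natAbs_pow] using this
        exact (hdtcop.pow_right 2).dvd_of_dvd_mul_right h1
      exact odd_dvd_oddPart hdodd (Nat.dvd_gcd (Nat.gcd_dvd_right _ _) hdD)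
    -- e divides lam2
    have hstu : Int.gcd (s - a*t) t = 1 := by
      have h1 : IsCoprime s t := Int.isCoprime_iff_gcd_eq_one.mpr hst
      have h2 : IsCoprime (s + t * (-a)) t := h1.add_mul_left_left (-a)
      rw [show s + t * (-a) = s - a*t by ring] at h2
      exact Int.isCoprime_iff_gcd_eq_one.mp h2
    have helam2 : e ∣ lam2 := by
      have heodd : ¬ 2 ∣ e := fun h => hg'odd (h.trans (Nat.gcd_dvd_left _ _))
      have heu : (e:ℤ) ∣ s - a*t := Int.natCast_dvd.mpr (Nat.gcd_dvd_right _ _)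
      have heq1 : (e:ℤ) ∣ Q1 a b s t :=
        (Int.natCast_dvd_natCast.mpr (Nat.gcd_dvd_left _ _)).trans hg'q1
      have heSt : (e:ℤ) ∣ (a^2+b^2) * t^2 := by
        rw [show (a^2+b^2) * t^2 = (s-a*t) * (2*(s-a*t)) - Q1 a b s t by simp only [Q1]; ring]
        exact dvd_sub (heu.mul_right _) heq1
      have hetcop : Nat.Coprime e t.natAbs := by
        set c := Nat.gcd e t.natAbs with hcdef
        have hcodd : ¬ 2 ∣ c := fun h => hg'odd (h.trans ((Nat.gcd_dvd_left e _).trans (Nat.gcd_dvd_left _ _)))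
        have hct : (c:ℤ) ∣ t := Int.natCast_dvd.mpr (Nat.gcd_dvd_right _ _)
        have hcq1 : (c:ℤ) ∣ Q1 a b s t :=
          (Int.natCast_dvd_natCast.mpr ((Nat.gcd_dvd_left e _).trans (Nat.gcd_dvd_left _ _))).trans hg'q1
        have hc2u : (c:ℤ) ∣ 2 * (s-a*t)^2 := by
          rw [show (2:ℤ) * (s-a*t)^2 = Q1 a b s t + t * ((a^2+b^2) * t) by simp only [Q1]; ring]
          exact dvd_add hcq1 (hct.mul_right _)
        have hcop2 : Nat.Coprime c 2 :=
          Nat.coprime_comm.mp ((Nat.Prime.coprime_iff_not_dvd Nat.prime_two).mpr hcodd)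
        have hcu2 : c ∣ (s-a*t).natAbs ^ 2 := by
          have h1 : c ∣ 2 * (s-a*t).natAbs ^ 2 := by
            have := Int.natCast_dvd.mp hc2u
            simpa [Int.natAbs_mul, Int.natAbs_pow] using this
          exact hcop2.dvd_of_dvd_mul_left h1
        have hccops : Nat.Coprime c (s-a*t).natAbs :=
          Nat.Coprime.coprime_dvd_left (Nat.gcd_dvd_right e _)
            ((show Nat.Coprime (s-a*t).natAbs t.natAbs from hstu).symm)
        exact (hccops.pow_right 2).eq_one_of_dvd hcu2
      have heS : e ∣ (a^2+b^2).natAbs := by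
        have h1 : e ∣ (a^2+b^2).natAbs * t.natAbs ^ 2 := by
          have := Int.natCast_dvd.mp heSt
          simpa [Int.natAbs_mul, Int.natAbs_pow] using this
        exact (hetcop.pow_right 2).dvd_of_dvd_mul_right h1
      exact odd_dvd_oddPart heodd (Nat.dvd_gcd (Nat.gcd_dvd_right _ _) heS)
    exact hg'de.trans (mul_dvd_mul hdlam1 helam2)
  have hoddg : oddPart g = lam1 * lam2 := Nat.dvd_antisymm hglam hlamg
  -- conversion between integer and natural divisibility of g by powers of 2
  have toNat : ∀ n : ℕ, ((2:ℤ)^n ∣ Q1 a b s t) → ((2:ℤ)^n ∣ Q2 a b s t) → 2^n ∣ g := by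
    intro n h1 h2
    have := Int.dvd_coe_gcd h1 h2
    rw [← hg] at this
    exact_mod_cast this
  have fromNat : ∀ n : ℕ, 2^n ∣ g → ((2:ℤ)^n ∣ Q1 a b s t) ∧ ((2:ℤ)^n ∣ Q2 a b s t) := by
    intro n hn
    have h1 : ((2:ℤ)^n) ∣ (g:ℤ) := by exact_mod_cast hn
    exact ⟨h1.trans hgq1, h1.trans hgq2⟩
  have final : ∀ ν : ℕ, padicValNat 2 g = ν → g = 2 ^ ν * lam1 * lam2 := by
    intro ν hν
    rw [mul_assoc, ← hoddg, ← hν, two_pow_mul_oddPart]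
  apply final
  have hnotboth : ¬ ((2:ℤ) ∣ a ∧ (2:ℤ) ∣ b) := by
    rintro ⟨x, y⟩
    have := Int.dvd_gcd x y
    rw [hab] at this
    norm_num at this
  by_cases h2ab : (2:ℤ) ∣ a * b
  · -- a*b even : a^2 - b^2 is odd
    have h2D : ¬ (2:ℤ) ∣ a ^ 2 - b ^ 2 := by
      intro hD
      rcases Int.Prime.dvd_mul' Nat.prime_two (by exact_mod_cast h2ab) with h2a | h2b
      · have h2a' : (2:ℤ) ∣ a := by exact_mod_cast h2a
        have hb2 : (2:ℤ) ∣ b ^ 2 := by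
          rw [show b ^ 2 = a ^ 2 - (a ^ 2 - b ^ 2) by ring]
          exact dvd_sub (dvd_pow h2a' (by norm_num)) hD
        exact hnotboth ⟨h2a', Int.prime_two.dvd_of_dvd_pow hb2⟩
      · have h2b' : (2:ℤ) ∣ b := by exact_mod_cast h2b
        have ha2 : (2:ℤ) ∣ a ^ 2 := by
          rw [show a ^ 2 = (a ^ 2 - b ^ 2) + b ^ 2 by ring]
          exact dvd_add hD (dvd_pow h2b' (by norm_num))
        exact hnotboth ⟨Int.prime_two.dvd_of_dvd_pow ha2, h2b'⟩
    by_cases h2t : (2:ℤ) ∣ t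
    · -- t even, s odd : ν = 1
      rw [if_pos h2ab, if_pos h2t]
      have h2s : ¬ (2:ℤ) ∣ s := by
        intro h
        have := Int.dvd_gcd h h2t
        rw [hst] at this
        norm_num at this
      obtain ⟨t', rfl⟩ := h2t
      refine padicValNat_eq_of_dvd_not_dvd hgne (toNat 1 ?_ ?_) ?_
      · rw [pow_one]
        exact ⟨s ^ 2 + (a ^ 2 - b ^ 2) * (2 * t' ^ 2) - 4 * a * s * t', by simp only [Q1]; ring⟩
      · rw [pow_one]
        exact ⟨(a ^ 2 - b ^ 2) * (2 * t' ^ 2) - s ^ 2, by simp only [Q2]; ring⟩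
      · intro hcon
        have h41 := (fromNat (1 + 1) hcon).2
        rw [show Q2 a b s (2 * t') = 2 ^ 1 * (2 * ((a ^ 2 - b ^ 2) * t' ^ 2) - s ^ 2) by
          simp only [Q2]; ring] at h41
        revert h41
        apply not_two_pow_succ_dvd
        apply not_two_dvd_of_zmod
        push_cast
        rw [zmod2_one h2s]
        ring_nf
        simp [show ((2:ZMod 2)) = 0 from rfl, show ((4:ZMod 2)) = 0 from by decide, pow_succ]
        all_goals decide
    · -- t odd : ν = 0
      rw [if_pos h2ab, if_neg h2t]
      refine padicValNat_eq_of_dvd_not_dvd hgne (by simpa using one_dvd g) ?_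
      intro hcon
      have h21 := (fromNat (0 + 1) hcon).2
      rw [pow_one] at h21
      revert h21
      apply not_two_dvd_of_zmod
      rw [show Q2 a b s t = -2 * s ^ 2 + (a ^ 2 - b ^ 2) * t ^ 2 from rfl]
      have hD1 : ((a:ZMod 2)) ^ 2 - ((b:ZMod 2)) ^ 2 = 1 := by
        have hcast := zmod2_one h2D
        push_cast at hcast
        exact hcast
      push_cast
      rw [zmod2_one h2t, hD1]
      ring_nf
      simp [show ((2:ZMod 2)) = 0 from rfl, pow_succ]
      all_goals decide
  · -- a and b both odd
    have h2a : ¬ (2:ℤ) ∣ a := fun h => h2ab (h.mul_right b)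
    have h2b : ¬ (2:ℤ) ∣ b := fun h => h2ab (h.mul_left a)
    have hD8 : (8:ℤ) ∣ a ^ 2 - b ^ 2 := by
      have h1 := sq_mod_eight a h2a
      have h2 := sq_mod_eight b h2b
      omega
    by_cases h2s : (2:ℤ) ∣ s
    · have h2t : ¬ (2:ℤ) ∣ t := by
        intro h
        have := Int.dvd_gcd h2s h
        rw [hst] at this
        norm_num at this
      by_cases hs0 : s = 0
      · -- s = 0
        subst hs0
        rw [if_neg h2ab, if_pos h2s, if_pos rfl]
        have ht1 : t.natAbs = 1 := by simpa using hst
        have ht2 : t ^ 2 = 1 := by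
          rcases Int.natAbs_eq t with h | h <;> rw [h, ht1] <;> ring
        have hQ1 : Q1 a b 0 t = a ^ 2 - b ^ 2 := by
          simp only [Q1]; rw [ht2]; ring
        have hQ2 : Q2 a b 0 t = a ^ 2 - b ^ 2 := by
          simp only [Q2]; rw [ht2]; ring
        have hgval : g = (a ^ 2 - b ^ 2).natAbs := by
          rw [hg, hQ1, hQ2, Int.gcd_self]
        rw [hgval]
        rfl
      · -- s ≠ 0, s even
        rw [if_neg h2ab, if_pos h2s, if_neg hs0]
        obtain ⟨s', hs'odd, hseq⟩ := exists_two_pow_mul s hs0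
        obtain ⟨D₀, hD₀odd, hDeq⟩ := exists_two_pow_mul (a ^ 2 - b ^ 2) hD0
        set k := padicValInt 2 s with hkdef
        set m := padicValInt 2 (a ^ 2 - b ^ 2) with hmdef
        have hk : 1 ≤ k := by
          have h1 : ((2:ℕ):ℤ) ^ 1 ∣ s := by
            rw [show ((2:ℕ):ℤ) ^ 1 = (2:ℤ) by norm_num]
            exact h2s
          rcases (padicValInt_dvd_iff 1 s).mp h1 with h | h
          · exact absurd h hs0
          · exact h
        have hm : 3 ≤ m := by
          have h1 : ((2:ℕ):ℤ) ^ 3 ∣ a ^ 2 - b ^ 2 := by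
            rw [show ((2:ℕ):ℤ) ^ 3 = (8:ℤ) by norm_num]
            exact hD8
          rcases (padicValInt_dvd_iff 3 (a ^ 2 - b ^ 2)).mp h1 with h | h
          · exact absurd h hD0
          · exact h
        have hQ1e : Q1 a b s t = 2 * (2 ^ k * s') ^ 2 + (2 ^ m * D₀) * t ^ 2
            - 4 * a * (2 ^ k * s') * t := by
          rw [show Q1 a b s t = 2 * s ^ 2 + (a ^ 2 - b ^ 2) * t ^ 2 - 4 * a * s * t from rfl,
            hseq, hDeq]
        have hQ2e : Q2 a b s t = -2 * (2 ^ k * s') ^ 2 + (2 ^ m * D₀) * t ^ 2 := by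
          rw [show Q2 a b s t = -2 * s ^ 2 + (a ^ 2 - b ^ 2) * t ^ 2 from rfl, hseq, hDeq]
        obtain ⟨cb1, cb2, cb3⟩ := caseB2 k m hk hm s' D₀ a t hs'odd hD₀odd h2a h2t
        refine padicValNat_eq_of_dvd_not_dvd hgne (toNat _ ?_ ?_) ?_
        · rw [hQ1e]; exact cb1
        · rw [hQ2e]; exact cb2
        · intro hcon
          obtain ⟨hx, hy⟩ := fromNat _ hcon
          rw [hQ1e] at hx
          rw [hQ2e] at hy
          exact cb3 ⟨hx, hy⟩
    · -- s odd : ν = 1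
      rw [if_neg h2ab, if_neg h2s]
      obtain ⟨D₀, hD₀⟩ := hD8
      refine padicValNat_eq_of_dvd_not_dvd hgne (toNat 1 ?_ ?_) ?_
      · rw [pow_one]
        exact ⟨s ^ 2 + 4 * D₀ * t ^ 2 - 2 * a * s * t, by simp only [Q1]; rw [hD₀]; ring⟩
      · rw [pow_one]
        exact ⟨4 * D₀ * t ^ 2 - s ^ 2, by simp only [Q2]; rw [hD₀]; ring⟩
      · intro hcon
        have h41 := (fromNat (1 + 1) hcon).2
        rw [show Q2 a b s t = 2 ^ 1 * (2 * (2 * (D₀ * t ^ 2)) - s ^ 2) by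
          simp only [Q2]; rw [hD₀]; ring] at h41
        revert h41
        apply not_two_pow_succ_dvd
        apply not_two_dvd_of_zmod
        push_cast
        rw [zmod2_one h2s]
        ring_nf
        simp [show ((2:ZMod 2)) = 0 from rfl, show ((4:ZMod 2)) = 0 from by decide, pow_succ]
        all_goals decide
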